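/- Let p be a prime, m ≥ 1 and n = 2m+1. For g₁, g₂ ∈ U_{m+1}(F_p), let λ(g₁) ∈ U_n(F_p) be the matrix agreeing with the identity except that its top-left (m+1)×(m+1) block equals g₁, and let ρ(g₂) ∈ U_n(F_p) be the matrix agreeing with the identity except that its bottom-right (m+1)×(m+1) block equals g₂. Then for every m×m matrix h over F_p: (λ(g₁)·ρ(g₂)) · ι(h) · (λ(g₁)·ρ(g₂))⁻¹ = ι( π(g₁) · h · π'(g₂)⁻¹ ). In other words, the conjugation action of U_n(F_p)/S_n ≅ U_{m+1}(F_p) × U_{m+1}(F_p) on S_n ≅ V_m ⊗ V_m* is the natural action pulled back along (π, π'). -/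

import Mathlib

/-- `g` is an upper unitriangular matrix. -/
def IsUni {n : ℕ} {R : Type*} [CommRing R] (g : Matrix (Fin n) (Fin n) R) : Prop :=
  (∀ i, g i i = 1) ∧ ∀ i j : Fin n, (j : ℕ) < (i : ℕ) → g i j = 0

/-- `ι(h)`: the identity matrix except that its top right `m × m` block
(rows `1,…,m` and columns `m+2,…,2m+1`, in one-based indexing) is `h`. -/
def iota (p m : ℕ) (h : Matrix (Fin m) (Fin m) (ZMod p)) :
    Matrix (Fin (2 * m + 1)) (Fin (2 * m + 1)) (ZMod p) :=
  Matrix.of fun i j =>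
    (if i = j then 1 else 0) +
      if hij : (i : ℕ) < m ∧ m + 1 ≤ (j : ℕ) then
        h ⟨i, hij.1⟩ ⟨(j : ℕ) - (m + 1), by have := j.isLt; omega⟩
      else 0

/-- `λ(g₁)`: the identity `(2m+1) × (2m+1)` matrix except that its top left
`(m+1) × (m+1)` block is `g₁`. -/
def lam (p m : ℕ) (g₁ : Matrix (Fin (m + 1)) (Fin (m + 1)) (ZMod p)) :
    Matrix (Fin (2 * m + 1)) (Fin (2 * m + 1)) (ZMod p) :=
  Matrix.of fun i j =>
    if hij : (i : ℕ) < m + 1 ∧ (j : ℕ) < m + 1 then g₁ ⟨i, hij.1⟩ ⟨j, hij.2⟩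
    else if i = j then 1 else 0

/-- `ρ(g₂)`: the identity `(2m+1) × (2m+1)` matrix except that its bottom right
`(m+1) × (m+1)` block is `g₂`. -/
def rho (p m : ℕ) (g₂ : Matrix (Fin (m + 1)) (Fin (m + 1)) (ZMod p)) :
    Matrix (Fin (2 * m + 1)) (Fin (2 * m + 1)) (ZMod p) :=
  Matrix.of fun i j =>
    if hij : m ≤ (i : ℕ) ∧ m ≤ (j : ℕ) then
      g₂ ⟨(i : ℕ) - m, by have := i.isLt; omega⟩ ⟨(j : ℕ) - m, by have := j.isLt; omega⟩
    else if i = j then 1 else 0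

/-- `π`: delete the last row and the last column. -/
def pim (p m : ℕ) (g : Matrix (Fin (m + 1)) (Fin (m + 1)) (ZMod p)) :
    Matrix (Fin m) (Fin m) (ZMod p) :=
  Matrix.of fun i j => g i.castSucc j.castSucc

/-- `π'`: delete the first row and the first column. -/
def pim' (p m : ℕ) (g : Matrix (Fin (m + 1)) (Fin (m + 1)) (ZMod p)) :
    Matrix (Fin m) (Fin m) (ZMod p) :=
  Matrix.of fun i j => g i.succ j.succ

lemma isUni_det_isUnit {n : ℕ} {R : Type*} [CommRing R] {g : Matrix (Fin n) (Fin n) R}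
    (hg : IsUni g) : IsUnit g.det := by
  have hdet : g.det = 1 := by
    rw [Matrix.det_of_upperTriangular (fun i j hij => hg.2 i j hij)]
    simp [hg.1]
  simp [hdet]

def emb (a N m : ℕ) (ha : ∀ s : ℕ, s < m → a + s < N) : Fin m ↪ Fin N :=
  ⟨fun s => ⟨a + s, ha s s.2⟩, by
    intro s t hst
    have := congrArg Fin.val hst
    simp only at this
    exact Fin.ext (by omega)⟩

lemma sum_shift {M : Type*} [AddCommMonoid M] {N m : ℕ} (a : ℕ)
    (ha : ∀ s : ℕ, s < m → a + s < N) (F : Fin N → M)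
    (hF : ∀ k : Fin N, ((k : ℕ) < a ∨ a + m ≤ (k : ℕ)) → F k = 0) :
    ∑ k, F k = ∑ s : Fin m, F ⟨a + (s : ℕ), ha s s.2⟩ := by
  classical
  have h0 : ∀ s : Fin m, F ⟨a + (s : ℕ), ha s s.2⟩ = F (emb a N m ha s) := fun s => rfl
  simp only [h0, ← Finset.sum_map]
  symm
  apply Finset.sum_subset (Finset.subset_univ _)
  intro k _ hk
  apply hF
  by_contra hc
  push_neg at hc
  refine hk (Finset.mem_map.2 ⟨⟨(k : ℕ) - a, by omega⟩, Finset.mem_univ _, ?_⟩)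
  exact Fin.ext (by show a + ((k : ℕ) - a) = (k : ℕ); omega)

lemma sum_lt {M : Type*} [AddCommMonoid M] {N m : ℕ} (hm : m ≤ N) (F : Fin N → M)
    (hF : ∀ k : Fin N, m ≤ (k : ℕ) → F k = 0) :
    ∑ k, F k = ∑ s : Fin m, F ⟨s, by omega⟩ := by
  rw [sum_shift (N := N) (m := m) 0 (fun s hs => by omega) F
    (fun k hk => hF k (by omega))]
  exact Finset.sum_congr rfl fun s _ => congrArg F (Fin.ext (by simp))




lemma lam_mul_iota (p m : ℕ) (g₁ : Matrix (Fin (m + 1)) (Fin (m + 1)) (ZMod p))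
    (hg₁ : IsUni g₁) (h : Matrix (Fin m) (Fin m) (ZMod p)) :
    lam p m g₁ * iota p m h = iota p m (pim p m g₁ * h) * lam p m g₁ := by
  ext i j
  rw [Matrix.mul_apply, Matrix.mul_apply]
  have hde : ∀ k : Fin (2 * m + 1), lam p m g₁ i k * iota p m h k j
      = (if k = j then lam p m g₁ i k else 0)
        + lam p m g₁ i k *
          (if hkj : (k : ℕ) < m ∧ m + 1 ≤ (j : ℕ) then
            h ⟨k, hkj.1⟩ ⟨(j : ℕ) - (m + 1), by have := j.isLt; omega⟩ else 0) := by
    intro k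
    show lam p m g₁ i k * ((if k = j then 1 else 0) + _) = _
    rw [mul_add]
    congr 1
    split <;> simp
  have hde' : ∀ k : Fin (2 * m + 1),
      iota p m (pim p m g₁ * h) i k * lam p m g₁ k j
      = (if i = k then lam p m g₁ k j else 0)
        + (if hik : (i : ℕ) < m ∧ m + 1 ≤ (k : ℕ) then
            (pim p m g₁ * h) ⟨i, hik.1⟩ ⟨(k : ℕ) - (m + 1), by have := k.isLt; omega⟩
          else 0) * lam p m g₁ k j := by
    intro k
    show ((if i = k then 1 else 0) + _) * lam p m g₁ k j = _
    rw [add_mul]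
    congr 1
    split <;> simp
  simp only [hde, hde', Finset.sum_add_distrib]
  congr 1
  · rw [Finset.sum_ite_eq' Finset.univ j (lam p m g₁ i),
      Finset.sum_ite_eq Finset.univ i (fun k => lam p m g₁ k j)]
    simp
  · by_cases hj : m + 1 ≤ (j : ℕ)
    · -- left sum: restrict to k < m
      rw [sum_lt (show m ≤ 2 * m + 1 by omega) _
          (fun k hk => by rw [dif_neg (by omega), mul_zero])]
      -- right sum: termwise dirac at j
      have hterm : ∀ k : Fin (2 * m + 1),
          (if hik : (i : ℕ) < m ∧ m + 1 ≤ (k : ℕ) then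
            (pim p m g₁ * h) ⟨i, hik.1⟩ ⟨(k : ℕ) - (m + 1), by have := k.isLt; omega⟩
          else 0) * lam p m g₁ k j
          = if k = j then
              (if hik : (i : ℕ) < m ∧ m + 1 ≤ (k : ℕ) then
                (pim p m g₁ * h) ⟨i, hik.1⟩ ⟨(k : ℕ) - (m + 1), by have := k.isLt; omega⟩
              else 0) else 0 := by
        intro k
        by_cases hk : m + 1 ≤ (k : ℕ)
        · have : lam p m g₁ k j = if k = j then 1 else 0 := by
            show dite _ _ _ = _
            rw [dif_neg (by omega)]
          rw [this, mul_ite, mul_one, mul_zero]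
        · rw [dif_neg (by omega), zero_mul]
          split <;> rfl
      rw [Finset.sum_congr rfl fun k _ => hterm k,
        Finset.sum_ite_eq' Finset.univ j, if_pos (Finset.mem_univ _)]
      by_cases hi : (i : ℕ) < m
      · rw [dif_pos ⟨hi, hj⟩, Matrix.mul_apply]
        refine Finset.sum_congr rfl fun s _ => ?_
        have h1 : lam p m g₁ i ⟨(s : ℕ), by omega⟩
            = g₁ ⟨(i : ℕ), by omega⟩ ⟨(s : ℕ), by omega⟩ := by
          show dite _ _ _ = _
          rw [dif_pos ⟨(by omega : (i : ℕ) < m + 1), (by omega : (s : ℕ) < m + 1)⟩]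
        rw [h1, dif_pos (⟨(by omega : (s : ℕ) < m), hj⟩ :
          ((⟨(s : ℕ), by omega⟩ : Fin (2*m+1)) : ℕ) < m ∧ m + 1 ≤ (j : ℕ))]
        show g₁ _ _ * h _ _ = pim p m g₁ ⟨(i : ℕ), hi⟩ s * h s _
        show g₁ _ _ * h _ _ = g₁ _ _ * h _ _
        refine congrArg₂ (· * ·) (congrArg₂ g₁ (Fin.ext ?_) (Fin.ext ?_))
          (congrArg₂ h (Fin.ext ?_) (Fin.ext ?_)) <;> simp
      · rw [dif_neg (by omega)]
        refine Finset.sum_eq_zero fun s _ => ?_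
        have h1 : lam p m g₁ i ⟨(s : ℕ), by omega⟩ = 0 := by
          show dite _ _ _ = _
          by_cases hi1 : (i : ℕ) < m + 1
          · rw [dif_pos ⟨hi1, (by omega : (s : ℕ) < m + 1)⟩]
            exact hg₁.2 _ _ (show (s : ℕ) < (i : ℕ) by omega)
          · rw [dif_neg (fun hc => hi1 hc.1),
              if_neg (by intro hij; have := congrArg Fin.val hij; simp at this; omega)]
        rw [h1, zero_mul]
    · -- both sums vanish
      rw [Finset.sum_eq_zero fun k _ => by rw [dif_neg (by omega), mul_zero],
        Finset.sum_eq_zero fun k _ => ?_]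
      by_cases hk : m + 1 ≤ (k : ℕ)
      · have : lam p m g₁ k j = 0 := by
          show dite _ _ _ = _
          rw [dif_neg (by omega), if_neg (by intro hij; have := congrArg Fin.val hij; omega)]
        rw [this, mul_zero]
      · rw [dif_neg (by omega), zero_mul]


lemma rho_mul_iota (p m : ℕ) (g₂ : Matrix (Fin (m + 1)) (Fin (m + 1)) (ZMod p))
    (hg₂ : IsUni g₂) (h : Matrix (Fin m) (Fin m) (ZMod p)) :
    rho p m g₂ * iota p m (h * pim' p m g₂) = iota p m h * rho p m g₂ := by
  ext i j
  rw [Matrix.mul_apply, Matrix.mul_apply]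
  have hde : ∀ k : Fin (2 * m + 1), rho p m g₂ i k * iota p m (h * pim' p m g₂) k j
      = (if k = j then rho p m g₂ i k else 0)
        + rho p m g₂ i k *
          (if hkj : (k : ℕ) < m ∧ m + 1 ≤ (j : ℕ) then
            (h * pim' p m g₂) ⟨k, hkj.1⟩ ⟨(j : ℕ) - (m + 1), by have := j.isLt; omega⟩
          else 0) := by
    intro k
    show rho p m g₂ i k * ((if k = j then 1 else 0) + _) = _
    rw [mul_add]
    congr 1
    split <;> simp
  have hde' : ∀ k : Fin (2 * m + 1), iota p m h i k * rho p m g₂ k j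
      = (if i = k then rho p m g₂ k j else 0)
        + (if hik : (i : ℕ) < m ∧ m + 1 ≤ (k : ℕ) then
            h ⟨i, hik.1⟩ ⟨(k : ℕ) - (m + 1), by have := k.isLt; omega⟩
          else 0) * rho p m g₂ k j := by
    intro k
    show ((if i = k then 1 else 0) + _) * rho p m g₂ k j = _
    rw [add_mul]
    congr 1
    split <;> simp
  simp only [hde, hde', Finset.sum_add_distrib]
  congr 1
  · rw [Finset.sum_ite_eq' Finset.univ j (rho p m g₂ i),
      Finset.sum_ite_eq Finset.univ i (fun k => rho p m g₂ k j)]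
    simp
  · -- LHS: dirac at i
    have hterm : ∀ k : Fin (2 * m + 1),
        rho p m g₂ i k *
          (if hkj : (k : ℕ) < m ∧ m + 1 ≤ (j : ℕ) then
            (h * pim' p m g₂) ⟨k, hkj.1⟩ ⟨(j : ℕ) - (m + 1), by have := j.isLt; omega⟩
          else 0)
        = if i = k then
            (if hkj : (k : ℕ) < m ∧ m + 1 ≤ (j : ℕ) then
              (h * pim' p m g₂) ⟨k, hkj.1⟩ ⟨(j : ℕ) - (m + 1), by have := j.isLt; omega⟩
            else 0) else 0 := by
      intro k
      by_cases hk : (k : ℕ) < m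
      · have : rho p m g₂ i k = if i = k then 1 else 0 := by
          show dite _ _ _ = _
          rw [dif_neg (by omega)]
        rw [this, ite_mul, one_mul, zero_mul]
      · rw [dif_neg (by omega), mul_zero]
        split <;> rfl
    rw [Finset.sum_congr rfl fun k _ => hterm k,
      Finset.sum_ite_eq Finset.univ i, if_pos (Finset.mem_univ _)]
    -- RHS: shift sum
    rw [sum_shift (N := 2 * m + 1) (m := m) (m + 1) (fun s hs => by omega) _
      (fun k hk => by
        have hk2 : (k : ℕ) < m + 1 := by have := k.isLt; omega
        rw [dif_neg (by omega), zero_mul])]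
    by_cases hi : (i : ℕ) < m
    · by_cases hj : m + 1 ≤ (j : ℕ)
      · rw [dif_pos ⟨hi, hj⟩, Matrix.mul_apply]
        refine Finset.sum_congr rfl fun s _ => ?_
        rw [dif_pos (⟨hi, (by omega : m + 1 ≤ m + 1 + (s : ℕ))⟩ :
          (i : ℕ) < m ∧ m + 1 ≤ ((⟨m + 1 + (s : ℕ), by omega⟩ : Fin (2 * m + 1)) : ℕ))]
        have hrho : rho p m g₂ ⟨m + 1 + (s : ℕ), by omega⟩ j
            = g₂ ⟨m + 1 + (s : ℕ) - m, by omega⟩ ⟨(j : ℕ) - m, by have := j.isLt; omega⟩ := by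
          show dite _ _ _ = _
          rw [dif_pos ⟨(by omega : m ≤ m + 1 + (s : ℕ)), (by omega : m ≤ (j : ℕ))⟩]
        rw [hrho]
        show h _ _ * pim' p m g₂ s _ = h _ _ * g₂ _ _
        show h _ _ * g₂ s.succ _ = h _ _ * g₂ _ _
        refine congrArg₂ (· * ·) (congrArg₂ h (Fin.ext ?_) (Fin.ext ?_))
          (congrArg₂ g₂ (Fin.ext ?_) (Fin.ext ?_)) <;> simp <;> omega
      · rw [dif_neg (fun hc => hj hc.2)]
        symm
        refine Finset.sum_eq_zero fun s _ => ?_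
        have hrho : rho p m g₂ ⟨m + 1 + (s : ℕ), by omega⟩ j = 0 := by
          show dite _ _ _ = _
          by_cases hj2 : m ≤ (j : ℕ)
          · rw [dif_pos ⟨(by omega : m ≤ m + 1 + (s : ℕ)), hj2⟩]
            exact hg₂.2 _ _ (show (j : ℕ) - m < m + 1 + (s : ℕ) - m by omega)
          · rw [dif_neg (fun hc => hj2 hc.2),
              if_neg (by intro e; have := congrArg Fin.val e; simp at this; omega)]
        rw [hrho, mul_zero]
    · rw [dif_neg (fun hc => hi hc.1)]
      symm
      refine Finset.sum_eq_zero fun s _ => ?_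
      rw [dif_neg (fun hc => hi hc.1), zero_mul]

lemma isUni_lam (p m : ℕ) (g₁ : Matrix (Fin (m + 1)) (Fin (m + 1)) (ZMod p))
    (hg₁ : IsUni g₁) : IsUni (lam p m g₁) := by
  constructor
  · intro i
    show dite _ _ _ = 1
    by_cases hi : (i : ℕ) < m + 1
    · rw [dif_pos ⟨hi, hi⟩]; exact hg₁.1 _
    · rw [dif_neg (fun hc => hi hc.1), if_pos rfl]
  · intro i j hij
    show dite _ _ _ = 0
    by_cases hb : (i : ℕ) < m + 1 ∧ (j : ℕ) < m + 1
    · rw [dif_pos hb]; exact hg₁.2 _ _ (show (j : ℕ) < (i : ℕ) from hij)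
    · rw [dif_neg hb, if_neg (by intro e; rw [e] at hij; omega)]

lemma isUni_rho (p m : ℕ) (g₂ : Matrix (Fin (m + 1)) (Fin (m + 1)) (ZMod p))
    (hg₂ : IsUni g₂) : IsUni (rho p m g₂) := by
  constructor
  · intro i
    show dite _ _ _ = 1
    by_cases hi : m ≤ (i : ℕ)
    · rw [dif_pos ⟨hi, hi⟩]; exact hg₂.1 _
    · rw [dif_neg (fun hc => hi hc.1), if_pos rfl]
  · intro i j hij
    show dite _ _ _ = 0
    by_cases hb : m ≤ (i : ℕ) ∧ m ≤ (j : ℕ)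
    · rw [dif_pos hb]; exact hg₂.2 _ _ (show (j : ℕ) - m < (i : ℕ) - m by omega)
    · rw [dif_neg hb, if_neg (by intro e; rw [e] at hij; omega)]

lemma isUni_pim' (p m : ℕ) (g : Matrix (Fin (m + 1)) (Fin (m + 1)) (ZMod p))
    (hg : IsUni g) : IsUni (pim' p m g) := by
  constructor
  · intro i; exact hg.1 _
  · intro i j hij
    exact hg.2 _ _ (show (j : ℕ) + 1 < (i : ℕ) + 1 by omega)

/-- For a prime `p`, `m ≥ 1`, `n = 2m+1`, and `g₁, g₂ ∈ U_{m+1}(F_p)`: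
`(λ(g₁)·ρ(g₂)) · ι(h) · (λ(g₁)·ρ(g₂))⁻¹ = ι(π(g₁) · h · π'(g₂)⁻¹)`; i.e. the conjugation
action of `U_n(F_p)/S_n ≅ U_{m+1}(F_p) × U_{m+1}(F_p)` on `S_n ≅ V_m ⊗ V_m*` is the natural
action pulled back along `(π, π')`. -/
theorem stmt_2 (p m : ℕ) (hp : p.Prime) (hm : 1 ≤ m)
    (g₁ g₂ : Matrix (Fin (m + 1)) (Fin (m + 1)) (ZMod p))
    (hg₁ : IsUni g₁) (hg₂ : IsUni g₂) :
    ∀ h : Matrix (Fin m) (Fin m) (ZMod p),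
      (lam p m g₁ * rho p m g₂) * iota p m h * (lam p m g₁ * rho p m g₂)⁻¹ =
        iota p m (pim p m g₁ * h * (pim' p m g₂)⁻¹) := by
  intro h
  have hLd : IsUnit (lam p m g₁).det := isUni_det_isUnit (isUni_lam p m g₁ hg₁)
  have hRd : IsUnit (rho p m g₂).det := isUni_det_isUnit (isUni_rho p m g₂ hg₂)
  have hPd : IsUnit (pim' p m g₂).det := isUni_det_isUnit (isUni_pim' p m g₂ hg₂)
  have key2 : rho p m g₂ * iota p m h * (rho p m g₂)⁻¹
      = iota p m (h * (pim' p m g₂)⁻¹) := by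
    have hcan : h * (pim' p m g₂)⁻¹ * pim' p m g₂ = h :=
      Matrix.nonsing_inv_mul_cancel_right _ _ hPd
    conv_lhs => rw [← hcan]
    rw [rho_mul_iota p m g₂ hg₂ (h * (pim' p m g₂)⁻¹),
      Matrix.mul_nonsing_inv_cancel_right _ _ hRd]
  have key1 : lam p m g₁ * iota p m (h * (pim' p m g₂)⁻¹) * (lam p m g₁)⁻¹
      = iota p m (pim p m g₁ * h * (pim' p m g₂)⁻¹) := by
    rw [lam_mul_iota p m g₁ hg₁ _, Matrix.mul_nonsing_inv_cancel_right _ _ hLd,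
      Matrix.mul_assoc]
  have step : (lam p m g₁ * rho p m g₂) * iota p m h * (lam p m g₁ * rho p m g₂)⁻¹
      = lam p m g₁ * (rho p m g₂ * iota p m h * (rho p m g₂)⁻¹) * (lam p m g₁)⁻¹ := by
    rw [Matrix.mul_inv_rev]
    simp only [Matrix.mul_assoc]
  rw [step, key2, key1]
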